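/- For all i ≥ 2 and all n with 13·2^{i-2} - 1 ≤ n ≤ 5·2^i, the set {2^i - 1, 3·2^{i-1} - 1, 2^{i+1} - 1, 3·2^i - 1} is a string attractor for the prefix of length n of the Thue-Morse word. -/

import Mathlib

def IsAttractor {α : Type*} (w : ℕ → α) (n : ℕ) (S : Finset ℕ) : Prop :=
  (∀ s ∈ S, s < n) ∧
  ∀ i j : ℕ, i ≤ j → j < n →
    ∃ i' j' : ℕ, i' ≤ j' ∧ j' < n ∧ j' - i' = j - i ∧
      (∀ t, t ≤ j - i → w (i' + t) = w (i + t)) ∧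
      ∃ s ∈ S, i' ≤ s ∧ s ≤ j'

def tmStep : ℕ → List ℕ
  | 0 => [0, 1]
  | _ => [1, 0]

def tmIter : ℕ → List ℕ
  | 0 => [0]
  | k + 1 => (tmIter k).flatMap tmStep

/-- The Thue-Morse word: fixed point, starting with 0, of 0 → 01, 1 → 10. -/
def tm (n : ℕ) : ℕ := (tmIter (n + 1)).getD n 0

lemma tmStep_length (a : ℕ) : (tmStep a).length = 2 := by
  cases a <;> rfl

lemma flatMap_length (l : List ℕ) : (l.flatMap tmStep).length = 2 * l.length := by
  induction l with
  | nil => rfl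
  | cons a t ih => simp [List.flatMap_cons, ih, tmStep_length]; ring

lemma tmIter_length (k : ℕ) : (tmIter k).length = 2 ^ k := by
  induction k with
  | zero => rfl
  | succ k ih => rw [tmIter, flatMap_length, ih]; ring

lemma flatMap_prefix {l l' : List ℕ} (h : l <+: l') :
    l.flatMap tmStep <+: l'.flatMap tmStep := by
  obtain ⟨t, rfl⟩ := h
  exact ⟨t.flatMap tmStep, by rw [List.flatMap_append]⟩

lemma tmIter_prefix_succ (k : ℕ) : tmIter k <+: tmIter (k+1) := by
  induction k with
  | zero => exact ⟨[1], rfl⟩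
  | succ k ih => exact flatMap_prefix ih

lemma tmIter_prefix : ∀ {k m : ℕ}, k ≤ m → tmIter k <+: tmIter m := by
  intro k m h
  induction m with
  | zero => interval_cases k; exact List.prefix_refl _
  | succ m ih =>
    rcases Nat.lt_or_ge k (m+1) with h' | h'
    · exact (ih (by omega)).trans (tmIter_prefix_succ m)
    · have : k = m + 1 := by omega
      subst this; exact List.prefix_refl _

lemma tm_eq {m n : ℕ} (h : n < 2 ^ m) : tm n = (tmIter m).getD n 0 := by
  unfold tm
  rcases le_total m (n+1) with hm | hm
  · obtain ⟨t, ht⟩ := tmIter_prefix hm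
    rw [← ht, List.getD_append _ _ _ _ (by rw [tmIter_length]; exact h)]
  · obtain ⟨t, ht⟩ := tmIter_prefix hm
    rw [← ht, List.getD_append _ _ _ _ (by rw [tmIter_length]; exact (Nat.lt_two_pow_self (n := n)).trans (Nat.pow_lt_pow_succ (by norm_num)))]

lemma flatMap_getD (l : List ℕ) : ∀ k r : ℕ, k < l.length → r < 2 →
    (l.flatMap tmStep).getD (2*k+r) 0 = (tmStep (l.getD k 0)).getD r 0 := by
  induction l with
  | nil => simp
  | cons a t ih =>
    intro k r hk hr
    cases k with
    | zero =>
      rw [List.flatMap_cons, show 2*0+r = r from by ring,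
        List.getD_append _ _ _ _ (by rw [tmStep_length]; exact hr)]
      rfl
    | succ k =>
      rw [List.flatMap_cons,
        List.getD_append_right _ _ _ _ (by rw [tmStep_length]; omega)]
      rw [tmStep_length, show 2*(k+1)+r-2 = 2*k+r from by omega]
      exact ih k r (by simpa using hk) hr

lemma tmIter_mem_le : ∀ m : ℕ, ∀ x ∈ tmIter m, x ≤ 1 := by
  intro m
  induction m with
  | zero => intro x hx; simp [tmIter] at hx; omega
  | succ m ih =>
    intro x hx
    rw [tmIter, List.mem_flatMap] at hx
    obtain ⟨a, _, hx⟩ := hx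
    rcases a with _ | a <;> simp [tmStep] at hx <;> omega

lemma tm_le_one (n : ℕ) : tm n ≤ 1 := by
  unfold tm
  rw [List.getD_eq_getElem _ _ (by rw [tmIter_length]; exact (Nat.lt_two_pow_self (n := n)).trans (Nat.pow_lt_pow_succ (by norm_num)))]
  exact tmIter_mem_le _ _ (List.getElem_mem _)

lemma tm_aux (k r : ℕ) (hr : r < 2) : tm (2*k+r) = (tmStep (tm k)).getD r 0 := by
  have h1 : tm (2*k+r) = (tmIter (k+2)).getD (2*k+r) 0 := by
    apply tm_eq
    have : k < 2 ^ (k+1) := (Nat.lt_two_pow_self (n := k)).trans (Nat.pow_lt_pow_succ (by norm_num))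
    have : 2^(k+2) = 2*2^(k+1) := by ring
    omega
  rw [h1, show tmIter (k+2) = (tmIter (k+1)).flatMap tmStep from rfl,
    flatMap_getD _ k r (by rw [tmIter_length]; exact (Nat.lt_two_pow_self (n := k)).trans (Nat.pow_lt_pow_succ (by norm_num))) hr]
  rfl

lemma tm_double (k : ℕ) : tm (2*k) = tm k := by
  have := tm_aux k 0 (by norm_num)
  rw [show 2*k+0 = 2*k from by ring] at this
  rw [this]
  have h := tm_le_one k
  interval_cases h' : tm k <;> rfl

lemma tm_odd (k : ℕ) : tm (2*k+1) = 1 - tm k := by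
  rw [tm_aux k 1 (by norm_num)]
  have h := tm_le_one k
  interval_cases h' : tm k <;> rfl

lemma pow_pos2 (k : ℕ) : 1 ≤ 2^k := Nat.one_le_two_pow

lemma tm0 : tm 0 = 0 := by decide
lemma tm1 : tm 1 = 1 := by decide
lemma tm2 : tm 2 = 1 := by decide
lemma tm3 : tm 3 = 0 := by decide

lemma tm_pow_sub_one (k : ℕ) : tm (2^k - 1) = k % 2 := by
  induction k with
  | zero => simpa using tm0
  | succ k ih =>
    have h1 := pow_pos2 k
    have h2 : 2^(k+1) - 1 = 2*(2^k - 1) + 1 := by rw [pow_succ]; omega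
    rw [h2, tm_odd, ih]
    omega

lemma tm_3pow_sub_one (k : ℕ) : tm (3*2^k - 1) = (k+1) % 2 := by
  induction k with
  | zero => simpa using tm2
  | succ k ih =>
    have h1 := pow_pos2 k
    have h2 : 3*2^(k+1) - 1 = 2*(3*2^k - 1) + 1 := by rw [pow_succ]; omega
    rw [h2, tm_odd, ih]
    omega

lemma tm_pow (k : ℕ) : tm (2^k) = 1 := by
  induction k with
  | zero => simpa using tm1
  | succ k ih => rw [pow_succ, show 2^k*2 = 2*2^k from by ring, tm_double, ih]

lemma tm_3pow (k : ℕ) : tm (3*2^k) = 0 := by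
  induction k with
  | zero => simpa using tm3
  | succ k ih => rw [pow_succ, show 3*(2^k*2) = 2*(3*2^k) from by ring, tm_double, ih]

lemma tm_pow_sub_two (k : ℕ) : tm (2^(k+1) - 2) = k % 2 := by
  have h1 := pow_pos2 k
  have h2 : 2^(k+1) - 2 = 2*(2^k - 1) := by rw [pow_succ]; omega
  rw [h2, tm_double, tm_pow_sub_one]

lemma tm_3pow_sub_two (k : ℕ) : tm (3*2^(k+1) - 2) = (k+1) % 2 := by
  have h1 := pow_pos2 k
  have h2 : 3*2^(k+1) - 2 = 2*(3*2^k - 1) := by rw [pow_succ]; omega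
  rw [h2, tm_double, tm_3pow_sub_one]

lemma tm_pow_add_one (k : ℕ) : tm (2^(k+1) + 1) = 0 := by
  have h2 : 2^(k+1) + 1 = 2*2^k + 1 := by rw [pow_succ]; ring
  rw [h2, tm_odd, tm_pow]

lemma tm_3pow_add_one (k : ℕ) : tm (3*2^(k+1) + 1) = 1 := by
  have h2 : 3*2^(k+1) + 1 = 2*(3*2^k) + 1 := by rw [pow_succ]; ring
  rw [h2, tm_odd, tm_3pow]

lemma tm_pow_sub_three (k : ℕ) : tm (2^(k+2) - 3) = (k+1) % 2 := by
  have h1 := pow_pos2 k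
  have h2 : 2^(k+2) - 3 = 2*(2^(k+1) - 2) + 1 := by rw [pow_succ, pow_succ]; omega
  rw [h2, tm_odd, tm_pow_sub_two]
  omega

lemma tm_3pow_sub_three (k : ℕ) : tm (3*2^(k+2) - 3) = k % 2 := by
  have h1 := pow_pos2 k
  have h2 : 3*2^(k+2) - 3 = 2*(3*2^(k+1) - 2) + 1 := by rw [pow_succ, pow_succ]; omega
  rw [h2, tm_odd, tm_3pow_sub_two]
  omega

def SA (i : ℕ) : Finset ℕ := {2 ^ i - 1, 3 * 2 ^ (i - 1) - 1, 2 ^ (i + 1) - 1, 3 * 2 ^ i - 1}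

lemma memP1 (m : ℕ) : 2^(m+3)-1 ∈ SA (m+3) := by simp [SA]
lemma memP2 (m : ℕ) : 3*2^(m+2)-1 ∈ SA (m+3) := by
  have : (m+3)-1 = m+2 := by omega
  simp [SA, this]
lemma memP3 (m : ℕ) : 2^(m+4)-1 ∈ SA (m+3) := by
  have : (m+3)+1 = m+4 := by omega
  simp [SA, this]
lemma memP4 (m : ℕ) : 3*2^(m+3)-1 ∈ SA (m+3) := by simp [SA]

lemma powfacts (m : ℕ) : 2^(m+2) = 4*2^m ∧ 2^(m+3) = 8*2^m ∧ 2^(m+4) = 16*2^m ∧ 1 ≤ 2^m := by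
  refine ⟨by ring, by ring, by ring, Nat.one_le_two_pow⟩

-- values
lemma F1 (m : ℕ) : tm (2^(m+3)-1) = (m+1)%2 := by rw [tm_pow_sub_one]; omega
lemma F2 (m : ℕ) : tm (2^(m+3)) = 1 := tm_pow _
lemma F3 (m : ℕ) : tm (2^(m+3)+1) = 0 := tm_pow_add_one (m+2)
lemma F4 (m : ℕ) : tm (2^(m+3)-2) = m%2 := by
  have := tm_pow_sub_two (m+2); rw [this]; omega
lemma F5 (m : ℕ) : tm (2^(m+3)-3) = m%2 := by
  have := tm_pow_sub_three (m+1); rw [this]; omega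
lemma G1 (m : ℕ) : tm (3*2^(m+2)-1) = (m+1)%2 := by rw [tm_3pow_sub_one]; omega
lemma G2 (m : ℕ) : tm (3*2^(m+2)) = 0 := tm_3pow _
lemma G3 (m : ℕ) : tm (3*2^(m+2)+1) = 1 := tm_3pow_add_one (m+1)
lemma G4 (m : ℕ) : tm (3*2^(m+2)-2) = m%2 := by
  have := tm_3pow_sub_two (m+1); rw [this]; omega
lemma G5 (m : ℕ) : tm (3*2^(m+2)-3) = m%2 := by
  have := tm_3pow_sub_three m; rw [this]
lemma H1 (m : ℕ) : tm (2^(m+4)-1) = m%2 := by rw [tm_pow_sub_one]; omega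
lemma H2 (m : ℕ) : tm (2^(m+4)) = 1 := tm_pow _
lemma H3 (m : ℕ) : tm (2^(m+4)+1) = 0 := tm_pow_add_one (m+3)
lemma H4 (m : ℕ) : tm (2^(m+4)-2) = (m+1)%2 := by
  have := tm_pow_sub_two (m+3); rw [this]; omega
lemma H5 (m : ℕ) : tm (2^(m+4)-3) = (m+1)%2 := by
  have := tm_pow_sub_three (m+2); rw [this]; omega
lemma K1 (m : ℕ) : tm (3*2^(m+3)-1) = m%2 := by rw [tm_3pow_sub_one]; omega
lemma K2 (m : ℕ) : tm (3*2^(m+3)) = 0 := tm_3pow _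
lemma K3 (m : ℕ) : tm (3*2^(m+3)+1) = 1 := tm_3pow_add_one (m+2)
lemma K4 (m : ℕ) : tm (3*2^(m+3)-2) = (m+1)%2 := by
  have := tm_3pow_sub_two (m+2); rw [this]; omega
lemma K5 (m : ℕ) : tm (3*2^(m+3)-3) = (m+1)%2 := by
  have := tm_3pow_sub_three (m+1); rw [this]

lemma sel_pair (m x0 x1 : ℕ) (h0 : x0 ≤ 1) (h1 : x1 ≤ 1) :
    ∃ s ∈ SA (m+3), s + 1 ≤ 3*2^(m+3) ∧ tm s = x0 ∧ tm (s+1) = x1 := by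
  obtain ⟨e2, e3, e4, e0⟩ := powfacts m
  by_cases hx0 : x0 = (m+1)%2 <;> by_cases hx1 : x1 = 1
  · exact ⟨2^(m+3)-1, memP1 m, by omega,
      by rw [F1]; omega,
      by rw [show 2^(m+3)-1+1 = 2^(m+3) from by omega, F2]; omega⟩
  · exact ⟨3*2^(m+2)-1, memP2 m, by omega,
      by rw [G1]; omega,
      by rw [show 3*2^(m+2)-1+1 = 3*2^(m+2) from by omega, G2]; omega⟩
  · exact ⟨2^(m+4)-1, memP3 m, by omega,
      by rw [H1]; omega,
      by rw [show 2^(m+4)-1+1 = 2^(m+4) from by omega, H2]; omega⟩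
  · exact ⟨3*2^(m+3)-1, memP4 m, by omega,
      by rw [K1]; omega,
      by rw [show 3*2^(m+3)-1+1 = 3*2^(m+3) from by omega, K2]; omega⟩

lemma sel_start (m x0 x1 x2 : ℕ) (h0 : x0 ≤ 1) (h1 : x1 ≤ 1) (h2 : x2 ≤ 1)
    (h12 : x1 ≠ x2) :
    ∃ s ∈ SA (m+3), s + 2 ≤ 3*2^(m+3)+1 ∧ tm s = x0 ∧ tm (s+1) = x1 ∧ tm (s+2) = x2 := by
  obtain ⟨e2, e3, e4, e0⟩ := powfacts m
  by_cases hx0 : x0 = (m+1)%2 <;> by_cases hx1 : x1 = 1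
  · exact ⟨2^(m+3)-1, memP1 m, by omega,
      by rw [F1]; omega,
      by rw [show 2^(m+3)-1+1 = 2^(m+3) from by omega, F2]; omega,
      by rw [show 2^(m+3)-1+2 = 2^(m+3)+1 from by omega, F3]; omega⟩
  · exact ⟨3*2^(m+2)-1, memP2 m, by omega,
      by rw [G1]; omega,
      by rw [show 3*2^(m+2)-1+1 = 3*2^(m+2) from by omega, G2]; omega,
      by rw [show 3*2^(m+2)-1+2 = 3*2^(m+2)+1 from by omega, G3]; omega⟩
  · exact ⟨2^(m+4)-1, memP3 m, by omega,
      by rw [H1]; omega,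
      by rw [show 2^(m+4)-1+1 = 2^(m+4) from by omega, H2]; omega,
      by rw [show 2^(m+4)-1+2 = 2^(m+4)+1 from by omega, H3]; omega⟩
  · exact ⟨3*2^(m+3)-1, memP4 m, by omega,
      by rw [K1]; omega,
      by rw [show 3*2^(m+3)-1+1 = 3*2^(m+3) from by omega, K2]; omega,
      by rw [show 3*2^(m+3)-1+2 = 3*2^(m+3)+1 from by omega, K3]; omega⟩

lemma sel_mid (m x0 x1 x2 : ℕ) (h0 : x0 ≤ 1) (h1 : x1 ≤ 1) (h2 : x2 ≤ 1)
    (h01 : x0 ≠ x1) :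
    ∃ q s, s ∈ SA (m+3) ∧ s = q + 1 ∧ q + 2 ≤ 3*2^(m+3) ∧
      tm q = x0 ∧ tm (q+1) = x1 ∧ tm (q+2) = x2 := by
  obtain ⟨e2, e3, e4, e0⟩ := powfacts m
  by_cases hx1 : x1 = (m+1)%2 <;> by_cases hx2 : x2 = 1
  · exact ⟨2^(m+3)-2, 2^(m+3)-1, memP1 m, by omega, by omega,
      by rw [F4]; omega,
      by rw [show 2^(m+3)-2+1 = 2^(m+3)-1 from by omega, F1]; omega,
      by rw [show 2^(m+3)-2+2 = 2^(m+3) from by omega, F2]; omega⟩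
  · exact ⟨3*2^(m+2)-2, 3*2^(m+2)-1, memP2 m, by omega, by omega,
      by rw [G4]; omega,
      by rw [show 3*2^(m+2)-2+1 = 3*2^(m+2)-1 from by omega, G1]; omega,
      by rw [show 3*2^(m+2)-2+2 = 3*2^(m+2) from by omega, G2]; omega⟩
  · exact ⟨2^(m+4)-2, 2^(m+4)-1, memP3 m, by omega, by omega,
      by rw [H4]; omega,
      by rw [show 2^(m+4)-2+1 = 2^(m+4)-1 from by omega, H1]; omega,
      by rw [show 2^(m+4)-2+2 = 2^(m+4) from by omega, H2]; omega⟩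
  · exact ⟨3*2^(m+3)-2, 3*2^(m+3)-1, memP4 m, by omega, by omega,
      by rw [K4]; omega,
      by rw [show 3*2^(m+3)-2+1 = 3*2^(m+3)-1 from by omega, K1]; omega,
      by rw [show 3*2^(m+3)-2+2 = 3*2^(m+3) from by omega, K2]; omega⟩

lemma sel_end (m x0 x1 x2 : ℕ) (h0 : x0 ≤ 1) (h1 : x1 ≤ 1) (h2 : x2 ≤ 1)
    (h01 : x0 = x1) (h12 : x1 ≠ x2) :
    ∃ q s, s ∈ SA (m+3) ∧ s = q + 2 ∧ q + 2 ≤ 2^(m+4)-1 ∧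
      tm q = x0 ∧ tm (q+1) = x1 ∧ tm (q+2) = x2 := by
  obtain ⟨e2, e3, e4, e0⟩ := powfacts m
  by_cases hx0 : x0 = m%2
  · exact ⟨2^(m+3)-3, 2^(m+3)-1, memP1 m, by omega, by omega,
      by rw [F5]; omega,
      by rw [show 2^(m+3)-3+1 = 2^(m+3)-2 from by omega, F4]; omega,
      by rw [show 2^(m+3)-3+2 = 2^(m+3)-1 from by omega, F1]; omega⟩
  · exact ⟨2^(m+4)-3, 2^(m+4)-1, memP3 m, by omega, by omega,
      by rw [H5]; omega,
      by rw [show 2^(m+4)-3+1 = 2^(m+4)-2 from by omega, H4]; omega,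
      by rw [show 2^(m+4)-3+2 = 2^(m+4)-1 from by omega, H1]; omega⟩

def tmN : ℕ := 2523490710

lemma tm_valbit : ∀ x, x < 32 → tm x = tmN >>> x % 2 := by
  have d1 : ∀ x, x < 32 → (tmIter 5).getD x 0 = tmN >>> x % 2 := by decide
  intro x hx
  rw [tm_eq (show x < 2^5 from hx), d1 x hx]

def PP (i n : ℕ) : Prop := ∀ a, a < n → ∃ s ∈ SA i, s < n ∧ tm s = tm a
def PS (i n : ℕ) : Prop := ∀ a, a+1 < n → ∃ s ∈ SA i, s+1 < n ∧ tm s = tm a ∧ tm (s+1) = tm (a+1)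
def QQ (i n : ℕ) : Prop := ∀ a d, 1 ≤ d → a+d < n →
  ∃ q s, s ∈ SA i ∧ q ≤ s ∧ s ≤ q+d ∧ q+d < n ∧ ∀ u, u ≤ d → tm (q+u) = tm (a+u)
def RR (i n : ℕ) : Prop := ∀ a d, 2 ≤ d → a+d < n →
  ∃ q s, s ∈ SA i ∧ q ≤ s ∧ s < q+d ∧ q+d < n ∧ ∀ u, u ≤ d → tm (q+u) = tm (a+u)

lemma mem_helper : ∀ s ∈ ([3,5,7,11] : List ℕ), s ∈ SA 2 ∧ s < 12 := by decide

lemma base_PP : ∀ n, 12 ≤ n → n ≤ 20 → PP 2 n := by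
  have hc : ∀ a, a < 20 → ∃ s ∈ ([3,5,7,11]:List ℕ), tmN >>> s % 2 = tmN >>> a % 2 := by decide
  intro n h1 h2 a ha
  obtain ⟨s, hs, he⟩ := hc a (by omega)
  obtain ⟨hs4, hs12⟩ := mem_helper s hs
  exact ⟨s, hs4, by omega, by rw [tm_valbit s (by omega), tm_valbit a (by omega)]; exact he⟩

lemma base_PS : ∀ n, 13 ≤ n → n ≤ 20 → PS 2 n := by
  have hc : ∀ a, a < 19 → ∃ s ∈ ([3,5,7,11]:List ℕ),
      tmN >>> s % 2 = tmN >>> a % 2 ∧ tmN >>> (s+1) % 2 = tmN >>> (a+1) % 2 := by decide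
  intro n h1 h2 a ha
  obtain ⟨s, hs, he1, he2⟩ := hc a (by omega)
  obtain ⟨hs4, hs12⟩ := mem_helper s hs
  exact ⟨s, hs4, by omega,
    by rw [tm_valbit s (by omega), tm_valbit a (by omega)]; exact he1,
    by rw [tm_valbit (s+1) (by omega), tm_valbit (a+1) (by omega)]; exact he2⟩

set_option maxHeartbeats 4000000 in
set_option maxRecDepth 100000 in
lemma base_QQ_core : ∀ e, e < 19 → ∀ a, a < 20 - (e+1) →
    ∃ q, q < 12 ∧ ∃ s ∈ ([3,5,7,11]:List ℕ), q ≤ s ∧ s ≤ q+(e+1) ∧ (q+(e+1) < 12 ∨ q+(e+1) ≤ a+(e+1)) ∧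
      ∀ u, u < e+2 → tmN >>> (q+u) % 2 = tmN >>> (a+u) % 2 := by decide

lemma base_QQ : ∀ n, 12 ≤ n → n ≤ 20 → QQ 2 n := by
  intro n h1 h2 a d hd had
  obtain ⟨d', rfl⟩ : ∃ d', d = d' + 1 := ⟨d - 1, by omega⟩
  obtain ⟨q, hq, s, hs, hqs, hsd, hqd, hm⟩ := base_QQ_core d' (by omega) a (by omega)
  obtain ⟨hs4, hs12⟩ := mem_helper s hs
  refine ⟨q, s, hs4, hqs, hsd, by omega, fun u hu => ?_⟩
  rw [tm_valbit (q+u) (by omega), tm_valbit (a+u) (by omega)]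
  exact hm u (by omega)

set_option maxHeartbeats 4000000 in
set_option maxRecDepth 100000 in
lemma base_RR_core : ∀ e, e < 18 → ∀ a, a < 20 - (e+2) →
    ∃ q, q < 12 ∧ ∃ s ∈ ([3,5,7,11]:List ℕ), q ≤ s ∧ s < q+(e+2) ∧ (q+(e+2) < 13 ∨ q+(e+2) ≤ a+(e+2)) ∧
      ∀ u, u < e+3 → tmN >>> (q+u) % 2 = tmN >>> (a+u) % 2 := by decide

lemma base_RR : ∀ n, 13 ≤ n → n ≤ 20 → RR 2 n := by
  intro n h1 h2 a d hd had
  obtain ⟨d', rfl⟩ : ∃ d', d = d' + 2 := ⟨d - 2, by omega⟩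
  obtain ⟨q, hq, s, hs, hqs, hsd, hqd, hm⟩ := base_RR_core d' (by omega) a (by omega)
  obtain ⟨hs4, hs12⟩ := mem_helper s hs
  refine ⟨q, s, hs4, hqs, hsd, by omega, fun u hu => ?_⟩
  rw [tm_valbit (q+u) (by omega), tm_valbit (a+u) (by omega)]
  exact hm u (by omega)

lemma transfer {q' q0 e : ℕ} (h : ∀ u, u ≤ e → tm (q'+u) = tm (q0+u)) :
    ∀ r u, r ≤ 1 → r + u ≤ 2*e+1 → tm (2*q' + r + u) = tm (2*q0 + r + u) := by
  intro r u hr hu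
  have hmod := Nat.div_add_mod (r+u) 2
  have hv2 : (r+u) % 2 = 0 ∨ (r+u) % 2 = 1 := by omega
  have hve : (r+u)/2 ≤ e := by omega
  have hq := h ((r+u)/2) hve
  rcases hv2 with h0 | h0
  · rw [show 2*q'+r+u = 2*(q'+(r+u)/2) from by omega,
      show 2*q0+r+u = 2*(q0+(r+u)/2) from by omega, tm_double, tm_double, hq]
  · rw [show 2*q'+r+u = 2*(q'+(r+u)/2)+1 from by omega,
      show 2*q0+r+u = 2*(q0+(r+u)/2)+1 from by omega, tm_odd, tm_odd, hq]

lemma SA_double (m s : ℕ) (hs : s ∈ SA (m+2)) : 2*s+1 ∈ SA (m+3) := by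
  obtain ⟨e2, e3, e4, e0⟩ := powfacts m
  have h1 : (m+2)-1 = m+1 := by omega
  have h2 : (m+3)-1 = m+2 := by omega
  have e1 : 2^(m+1) = 2*2^m := by ring
  simp only [SA, h1, h2, Finset.mem_insert, Finset.mem_singleton,
    show (m+2)+1 = m+3 from rfl, show (m+3)+1 = m+4 from rfl] at hs ⊢
  rcases hs with h|h|h|h <;> omega

lemma tm_no3 (a : ℕ) : tm a ≠ tm (a+1) ∨ tm (a+1) ≠ tm (a+2) := by
  have hle := tm_le_one (a/2)
  have hle1 := tm_le_one (a/2+1)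
  rcases (by omega : a % 2 = 0 ∨ a % 2 = 1) with h | h
  · left
    have h1 := tm_double (a/2)
    rw [show 2*(a/2) = a from by omega] at h1
    have h2 := tm_odd (a/2)
    rw [show 2*(a/2)+1 = a+1 from by omega] at h2
    omega
  · right
    have h1 := tm_double (a/2+1)
    rw [show 2*(a/2+1) = a+1 from by omega] at h1
    have h2 := tm_odd (a/2+1)
    rw [show 2*(a/2+1)+1 = a+2 from by omega] at h2
    omega

lemma step (m : ℕ)
    (ihQ : ∀ n, 13*2^m - 1 ≤ n → n ≤ 20*2^m → QQ (m+2) n)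
    (ihR : ∀ n, 13*2^m ≤ n → n ≤ 20*2^m → RR (m+2) n)
    (ihPS : ∀ n, 13*2^m ≤ n → n ≤ 20*2^m → PS (m+2) n) :
    (∀ n, 26*2^m - 1 ≤ n → n ≤ 40*2^m → (PP (m+3) n ∧ QQ (m+3) n)) ∧
    (∀ n, 26*2^m ≤ n → n ≤ 40*2^m → (RR (m+3) n ∧ PS (m+3) n)) := by
  obtain ⟨e2, e3, e4, e0⟩ := powfacts m
  have engineA : ∀ n, 26*2^m - 1 ≤ n → n ≤ 40*2^m → ∀ a d, 3 ≤ d → a + d < n → (a+d) % 2 = 0 →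
      ∃ q s, s ∈ SA (m+3) ∧ q ≤ s ∧ s < q+d ∧ q+d < n ∧ ∀ u, u ≤ d → tm (q+u) = tm (a+u) := by
    intro n hn1 hn2 a d hd hadn hb
    obtain ⟨q', s, hmem, h1, h2, h3, hmatch⟩ :=
      ihR ((n+1)/2) (by omega) (by omega) (a/2) ((a+d)/2 - a/2) (by omega) (by omega)
    refine ⟨2*q' + a%2, 2*s+1, SA_double m s hmem, by omega, by omega, by omega, ?_⟩
    intro u hu
    have ht := transfer hmatch (a%2) u (by omega) (by omega)
    rw [show a + u = 2*(a/2) + a%2 + u from by omega]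
    exact ht
  have engineB : ∀ n, 26*2^m ≤ n → n ≤ 40*2^m → ∀ a d, 3 ≤ d → a + d < n → (a+d) % 2 = 1 →
      ∃ q s, s ∈ SA (m+3) ∧ q ≤ s ∧ s < q+d ∧ q+d < n ∧ ∀ u, u ≤ d → tm (q+u) = tm (a+u) := by
    intro n hn1 hn2 a d hd hadn hb
    by_cases hdy : 2 ≤ (a+d)/2 - a/2
    · obtain ⟨q', s, hmem, h1, h2, h3, hmatch⟩ :=
        ihR (n/2) (by omega) (by omega) (a/2) ((a+d)/2 - a/2) hdy (by omega)
      refine ⟨2*q' + a%2, 2*s+1, SA_double m s hmem, by omega, by omega, by omega, ?_⟩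
      intro u hu
      have ht := transfer hmatch (a%2) u (by omega) (by omega)
      rw [show a + u = 2*(a/2) + a%2 + u from by omega]
      exact ht
    · obtain ⟨s, hmem, hlt, hv0, hv1⟩ := ihPS (n/2) (by omega) (by omega) (a/2) (by omega)
      have hmatch : ∀ u, u ≤ (a+d)/2 - a/2 → tm (s+u) = tm (a/2+u) := by
        intro u hu
        rcases (by omega : u = 0 ∨ u = 1) with rfl | rfl
        · simpa using hv0
        · exact hv1
      refine ⟨2*s + a%2, 2*s+1, SA_double m s hmem, by omega, by omega, by omega, ?_⟩
      intro u hu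
      have ht := transfer hmatch (a%2) u (by omega) (by omega)
      rw [show a + u = 2*(a/2) + a%2 + u from by omega]
      exact ht
  have engineC : ∀ n, 26*2^m - 1 ≤ n → n ≤ 40*2^m → ∀ a d, 3 ≤ d → a + d < n → (a+d) % 2 = 1 →
      ∃ q s, s ∈ SA (m+3) ∧ q ≤ s ∧ s ≤ q+d ∧ q+d < n ∧ ∀ u, u ≤ d → tm (q+u) = tm (a+u) := by
    intro n hn1 hn2 a d hd hadn hb
    obtain ⟨q', s, hmem, h1, h2, h3, hmatch⟩ :=
      ihQ (n/2) (by omega) (by omega) (a/2) ((a+d)/2 - a/2) (by omega) (by omega)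
    refine ⟨2*q' + a%2, 2*s+1, SA_double m s hmem, by omega, by omega, by omega, ?_⟩
    intro u hu
    have ht := transfer hmatch (a%2) u (by omega) (by omega)
    rw [show a + u = 2*(a/2) + a%2 + u from by omega]
    exact ht
  have prodPP : ∀ n, 26*2^m - 1 ≤ n → n ≤ 40*2^m → PP (m+3) n := by
    intro n hn1 hn2 a ha
    have h0 := tm_le_one a
    by_cases hx : tm a = (m+1)%2
    · exact ⟨2^(m+3)-1, memP1 m, by omega, by rw [F1, hx]⟩
    · exact ⟨3*2^(m+3)-1, memP4 m, by omega, by rw [K1]; omega⟩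
  have prodPS : ∀ n, 26*2^m ≤ n → n ≤ 40*2^m → PS (m+3) n := by
    intro n hn1 hn2 a ha
    obtain ⟨s, hmem, hb, hv0, hv1⟩ := sel_pair m (tm a) (tm (a+1)) (tm_le_one a) (tm_le_one (a+1))
    exact ⟨s, hmem, by omega, hv0, hv1⟩
  have prodQQ : ∀ n, 26*2^m - 1 ≤ n → n ≤ 40*2^m → QQ (m+3) n := by
    intro n hn1 hn2 a d hd hadn
    rcases (by omega : d = 1 ∨ d = 2 ∨ 3 ≤ d) with rfl | rfl | hd3
    · obtain ⟨s, hmem, hb, hv0, hv1⟩ := sel_pair m (tm a) (tm (a+1)) (tm_le_one a) (tm_le_one (a+1))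
      refine ⟨s, s, hmem, le_refl _, by omega, by omega, ?_⟩
      intro u hu
      rcases (by omega : u = 0 ∨ u = 1) with rfl | rfl
      · simpa using hv0
      · exact hv1
    · by_cases h01 : tm a = tm (a+1)
      · have h12 : tm (a+1) ≠ tm (a+2) := by
          rcases tm_no3 a with h | h
          · exact absurd h01 h
          · exact h
        obtain ⟨q, s, hmem, hse, hbnd, hv0, hv1, hv2⟩ := sel_end m (tm a) (tm (a+1)) (tm (a+2))
          (tm_le_one a) (tm_le_one (a+1)) (tm_le_one (a+2)) h01 h12
        refine ⟨q, s, hmem, by omega, by omega, by omega, ?_⟩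
        intro u hu
        rcases (by omega : u = 0 ∨ u = 1 ∨ u = 2) with rfl | rfl | rfl
        · simpa using hv0
        · exact hv1
        · exact hv2
      · obtain ⟨q, s, hmem, hse, hbnd, hv0, hv1, hv2⟩ := sel_mid m (tm a) (tm (a+1)) (tm (a+2))
          (tm_le_one a) (tm_le_one (a+1)) (tm_le_one (a+2)) h01
        refine ⟨q, s, hmem, by omega, by omega, by omega, ?_⟩
        intro u hu
        rcases (by omega : u = 0 ∨ u = 1 ∨ u = 2) with rfl | rfl | rfl
        · simpa using hv0
        · exact hv1
        · exact hv2
    · rcases (by omega : (a+d)%2 = 0 ∨ (a+d)%2 = 1) with hb | hb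
      · obtain ⟨q, s, hmem, h1, h2, h3, h4⟩ := engineA n hn1 hn2 a d hd3 hadn hb
        exact ⟨q, s, hmem, h1, by omega, h3, h4⟩
      · exact engineC n hn1 hn2 a d hd3 hadn hb
  have prodRR : ∀ n, 26*2^m ≤ n → n ≤ 40*2^m → RR (m+3) n := by
    intro n hn1 hn2 a d hd hadn
    rcases (by omega : d = 2 ∨ 3 ≤ d) with rfl | hd3
    · by_cases h01 : tm a = tm (a+1)
      · have h12 : tm (a+1) ≠ tm (a+2) := by
          rcases tm_no3 a with h | h
          · exact absurd h01 h
          · exact h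
        obtain ⟨s, hmem, hbnd, hv0, hv1, hv2⟩ := sel_start m (tm a) (tm (a+1)) (tm (a+2))
          (tm_le_one a) (tm_le_one (a+1)) (tm_le_one (a+2)) h12
        refine ⟨s, s, hmem, le_refl _, by omega, by omega, ?_⟩
        intro u hu
        rcases (by omega : u = 0 ∨ u = 1 ∨ u = 2) with rfl | rfl | rfl
        · simpa using hv0
        · exact hv1
        · exact hv2
      · obtain ⟨q, s, hmem, hse, hbnd, hv0, hv1, hv2⟩ := sel_mid m (tm a) (tm (a+1)) (tm (a+2))
          (tm_le_one a) (tm_le_one (a+1)) (tm_le_one (a+2)) h01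
        refine ⟨q, s, hmem, by omega, by omega, by omega, ?_⟩
        intro u hu
        rcases (by omega : u = 0 ∨ u = 1 ∨ u = 2) with rfl | rfl | rfl
        · simpa using hv0
        · exact hv1
        · exact hv2
    · rcases (by omega : (a+d)%2 = 0 ∨ (a+d)%2 = 1) with hb | hb
      · exact engineA n (by omega) hn2 a d hd3 hadn hb
      · exact engineB n hn1 hn2 a d hd3 hadn hb
  exact ⟨fun n h1 h2 => ⟨prodPP n h1 h2, prodQQ n h1 h2⟩,
    fun n h1 h2 => ⟨prodRR n h1 h2, prodPS n h1 h2⟩⟩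

lemma main : ∀ i, 2 ≤ i →
    ((∀ n, 13*2^(i-2)-1 ≤ n → n ≤ 5*2^i → PP i n ∧ QQ i n) ∧
     (∀ n, 13*2^(i-2) ≤ n → n ≤ 5*2^i → RR i n ∧ PS i n)) := by
  intro i hi
  induction i, hi using Nat.le_induction with
  | base =>
    constructor
    · intro n h1 h2
      norm_num at h1 h2
      exact ⟨base_PP n h1 h2, base_QQ n h1 h2⟩
    · intro n h1 h2
      norm_num at h1 h2
      exact ⟨base_RR n h1 h2, base_PS n h1 h2⟩
  | succ i hi ih =>
    obtain ⟨m, rfl⟩ : ∃ m, i = m + 2 := ⟨i - 2, by omega⟩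
    obtain ⟨ih1, ih2⟩ := ih
    have g0 : (m+2)-2 = m := by omega
    have g1 : (5:ℕ)*2^(m+2) = 20*2^m := by ring
    simp only [g0, g1] at ih1 ih2
    have hstep := step m (fun n h1 h2 => (ih1 n h1 h2).2)
      (fun n h1 h2 => (ih2 n h1 h2).1) (fun n h1 h2 => (ih2 n h1 h2).2)
    have g2 : (m+2+1)-2 = m+1 := by omega
    have g3 : (13:ℕ)*2^(m+1) = 26*2^m := by ring
    have g4 : (5:ℕ)*2^(m+2+1) = 40*2^m := by ring
    simp only [g2, g3, g4]
    exact ⟨fun n h1 h2 => hstep.1 n h1 h2, fun n h1 h2 => hstep.2 n h1 h2⟩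
/-- For `i ≥ 2` and `13·2^{i-2} - 1 ≤ n ≤ 5·2^i`, the set
`{2^i - 1, 3·2^{i-1} - 1, 2^{i+1} - 1, 3·2^i - 1}` is a string attractor for
the length-`n` prefix of Thue-Morse. -/
theorem tm_attractor_a :
    ∀ i : ℕ, 2 ≤ i → ∀ n : ℕ, 13 * 2 ^ (i - 2) - 1 ≤ n → n ≤ 5 * 2 ^ i →
      IsAttractor tm n
        ({2 ^ i - 1, 3 * 2 ^ (i - 1) - 1, 2 ^ (i + 1) - 1, 3 * 2 ^ i - 1} : Finset ℕ) := by
  intro i hi n h1 h2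
  obtain ⟨hPP, hQQ⟩ := (main i hi).1 n h1 h2
  obtain ⟨m, rfl⟩ : ∃ m, i = m + 2 := ⟨i - 2, by omega⟩
  have hSA : ({2 ^ (m+2) - 1, 3 * 2 ^ ((m+2) - 1) - 1, 2 ^ ((m+2) + 1) - 1,
      3 * 2 ^ (m+2) - 1} : Finset ℕ) = SA (m+2) := rfl
  rw [hSA]
  obtain ⟨e2, e3, e4, e0⟩ := powfacts m
  have g0 : (m+2)-2 = m := by omega
  rw [g0] at h1
  constructor
  · intro s hs
    have h5 : (m+2)-1 = m+1 := by omega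
    have e1 : (2:ℕ)^(m+1) = 2*2^m := by ring
    simp only [SA, h5, Finset.mem_insert, Finset.mem_singleton,
      show (m+2)+1 = m+3 from rfl] at hs
    rcases hs with rfl|rfl|rfl|rfl <;> omega
  · intro i0 j0 hij hj0
    rcases eq_or_lt_of_le hij with rfl | hlt
    · obtain ⟨s, hmem, hsn, hv⟩ := hPP i0 hj0
      refine ⟨s, s, le_refl _, hsn, by omega, ?_, ⟨s, hmem, le_refl _, le_refl _⟩⟩
      intro t ht
      have ht0 : t = 0 := by omega
      subst ht0
      simpa using hv
    · obtain ⟨q, s, hmem, hqs, hsq, hqd, hmatch⟩ :=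
        hQQ i0 (j0 - i0) (by omega) (by omega)
      refine ⟨q, q + (j0 - i0), by omega, by omega, by omega, ?_, ⟨s, hmem, hqs, hsq⟩⟩
      intro t ht
      exact hmatch t ht
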